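/- Let γ be a clock condition over a single clock x all of whose clock constants belong to {C_0, C_1, …, C_k}, where 0 = C_0 < C_1 < … < C_k. Then for every i ∈ {0, …, 2k+1} and all t, t' ∈ J_i, the value t satisfies γ if and only if t' satisfies γ. Consequently, for a one-clock timed automaton whose clock constants all belong to {C_0, …, C_k}, and any two configurations (q, t) and (q, t') with t, t' ∈ J_i, exactly the same transitions are available in (q, t) as in (q, t'). -/
import Mathlib


/-- Clock conditions over a set `X` of clocks:
`γ ::= true | x < c | x > c | x = c | γ ∧ γ | γ ∨ γ`. -/
inductive ClockCond (X : Type) where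
  | tt : ClockCond X
  | lt : X → ℝ → ClockCond X
  | gt : X → ℝ → ClockCond X
  | eq : X → ℝ → ClockCond X
  | conj : ClockCond X → ClockCond X → ClockCond X
  | disj : ClockCond X → ClockCond X → ClockCond X

/-- Satisfaction of a clock condition by a clock valuation `ν`. -/
def ClockCond.sat {X : Type} (ν : X → ℝ) : ClockCond X → Prop
  | .tt => True
  | .lt x c => ν x < c
  | .gt x c => ν x > c
  | .eq x c => ν x = c
  | .conj γ₁ γ₂ => γ₁.sat ν ∧ γ₂.sat ν
  | .disj γ₁ γ₂ => γ₁.sat ν ∨ γ₂.sat ν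

/-- A timed automaton with alphabet `A`, state set `Q`, and clock set `X`:
initial states, a transition relation `E ⊆ Q × A × C_X × Q × 2^X`,
and final states. -/
structure TimedAutomaton (A Q X : Type) where
  I : Set Q
  E : Set (Q × A × ClockCond X × Q × Set X)
  F : Set Q

/-- One step of a timed automaton on a stream element `e : A ⊕ ℝ`:
a time span increments all clocks; a letter fires a transition whose clock
condition is satisfied, resetting the clocks in its reset set. -/
def TimedAutomaton.Step {A Q X : Type} (M : TimedAutomaton A Q X)
    (e : A ⊕ ℝ) (c c' : Q × (X → ℝ)) : Prop :=
  match e with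
  | .inr r => c'.1 = c.1 ∧ ∀ x, c'.2 x = c.2 x + r
  | .inl a => ∃ γ Z, (c.1, a, γ, c'.1, Z) ∈ M.E ∧ γ.sat c.2 ∧
      (∀ x ∈ Z, c'.2 x = 0) ∧ (∀ x ∉ Z, c'.2 x = c.2 x)

/-- A run of a timed automaton on a timed word, from a configuration to a
configuration. -/
inductive TimedAutomaton.RunFrom {A Q X : Type} (M : TimedAutomaton A Q X) :
    List (A ⊕ ℝ) → (Q × (X → ℝ)) → (Q × (X → ℝ)) → Prop
  | nil (c) : M.RunFrom [] c c
  | cons {e w c c' c''} : M.Step e c c' → M.RunFrom w c' c'' →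
      M.RunFrom (e :: w) c c''

/-- A timed automaton accepts a timed word if it admits a successful run on
it: starting in an initial state with all clocks `0`, ending in a final
state. -/
def TimedAutomaton.Accepts {A Q X : Type} (M : TimedAutomaton A Q X)
    (w : List (A ⊕ ℝ)) : Prop :=
  ∃ q₀ ∈ M.I, ∃ c' : Q × (X → ℝ), M.RunFrom w (q₀, fun _ => 0) c' ∧ c'.1 ∈ M.F

/-- A timed word: all its real (time span) elements are positive. -/
def IsTimedWord {A : Type} (w : List (A ⊕ ℝ)) : Prop :=
  ∀ e ∈ w, ∀ r : ℝ, e = Sum.inr r → 0 < r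

/-- `M.Active w n` is the set `K_n` of configurations `(q, t)` of a one-clock
timed automaton that are active at step `n` of the stream `w`, i.e. reachable
by a run on the prefix `w[1…n]` from some initial configuration `(q₀, 0)`. -/
def TimedAutomaton.Active {A Q : Type} (M : TimedAutomaton A Q Unit)
    (w : List (A ⊕ ℝ)) (n : ℕ) : Set (Q × ℝ) :=
  {c | ∃ q₀ ∈ M.I, M.RunFrom (w.take n) (q₀, fun _ => 0) (c.1, fun _ => c.2)}

/-- The set of clock constants appearing in a clock condition. -/
def ClockCond.constants {X : Type} : ClockCond X → Set ℝ
  | .tt => ∅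
  | .lt _ c => {c}
  | .gt _ c => {c}
  | .eq _ c => {c}
  | .conj γ₁ γ₂ => γ₁.constants ∪ γ₂.constants
  | .disj γ₁ γ₂ => γ₁.constants ∪ γ₂.constants

/-- The intervals `J_0, …, J_{2k+1}` determined by clock constants
`0 = C 0 < C 1 < … < C k` (with `C (k+1) = ∞`). -/
def Jint (k : ℕ) (C : ℕ → ℝ) (i : ℕ) : Set ℝ :=
  if i % 2 = 0 then {C (i / 2)}
  else if i = 2 * k + 1 then Set.Ioi (C k)
  else Set.Ioo (C (i / 2)) (C (i / 2 + 1))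

/-- If all clock constants of a one-clock condition `γ` belong to
`{C 0, …, C k}` where `0 = C 0 < … < C k`, then any two clock values lying in
the same interval `J i` satisfy `γ` or fail it simultaneously.  Consequently,
for a one-clock timed automaton all of whose clock constants belong to
`{C 0, …, C k}`, exactly the same transitions are available in `(q, t)` as in
`(q, t')` whenever `t, t' ∈ J i`. -/
lemma Jint_trich (k : ℕ) (C : ℕ → ℝ)
    (hmono : ∀ i, i < k → C i < C (i + 1))
    {i : ℕ} (hi : i ≤ 2 * k + 1) {t t' : ℝ}
    (ht : t ∈ Jint k C i) (ht' : t' ∈ Jint k C i)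
    {j : ℕ} (hj : j ≤ k) :
    (C j < t ∧ C j < t') ∨ (t < C j ∧ t' < C j) ∨ t = t' := by
  have hle : ∀ a b, a ≤ b → b ≤ k → C a ≤ C b := by
    intro a b hab hbk
    induction b with
    | zero => obtain rfl : a = 0 := Nat.le_zero.mp hab; exact le_rfl
    | succ n ih =>
      rcases Nat.eq_or_lt_of_le hab with h | h
      · rw [h]
      · exact le_trans (ih (by omega) (by omega)) (le_of_lt (hmono n (by omega)))
  unfold Jint at ht ht'
  by_cases h0 : i % 2 = 0
  · simp only [h0, if_true, Set.mem_singleton_iff] at ht ht'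
    right; right; rw [ht, ht']
  · simp only [h0, if_false] at ht ht'
    by_cases h1 : i = 2 * k + 1
    · simp only [h1, if_true, Set.mem_Ioi] at ht ht'
      exact Or.inl ⟨lt_of_le_of_lt (hle j k hj le_rfl) ht,
        lt_of_le_of_lt (hle j k hj le_rfl) ht'⟩
    · simp only [h1, if_false, Set.mem_Ioo] at ht ht'
      have hm : i / 2 + 1 ≤ k := by omega
      rcases le_or_gt j (i / 2) with hjm | hjm
      · exact Or.inl ⟨lt_of_le_of_lt (hle j (i / 2) hjm (by omega)) ht.1,
          lt_of_le_of_lt (hle j (i / 2) hjm (by omega)) ht'.1⟩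
      · exact Or.inr (Or.inl ⟨lt_of_lt_of_le ht.2 (hle (i / 2 + 1) j hjm hj),
          lt_of_lt_of_le ht'.2 (hle (i / 2 + 1) j hjm hj)⟩)

lemma sat_iff_of_Jint (k : ℕ) (C : ℕ → ℝ)
    (hmono : ∀ i, i < k → C i < C (i + 1))
    (γ : ClockCond Unit)
    (hγ : γ.constants ⊆ {c | ∃ i ≤ k, C i = c})
    {i : ℕ} (hi : i ≤ 2 * k + 1) {t t' : ℝ}
    (ht : t ∈ Jint k C i) (ht' : t' ∈ Jint k C i) :
    γ.sat (fun _ => t) ↔ γ.sat (fun _ => t') := by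
  induction γ with
  | tt => simp [ClockCond.sat]
  | lt x c =>
    obtain ⟨j, hj, hc⟩ := hγ rfl
    subst hc
    rcases Jint_trich k C hmono hi ht ht' hj with ⟨h1, h2⟩ | ⟨h1, h2⟩ | h
    · simp [ClockCond.sat, not_lt_of_gt h1, not_lt_of_gt h2]
    · simp [ClockCond.sat, h1, h2]
    · simp [ClockCond.sat, h]
  | gt x c =>
    obtain ⟨j, hj, hc⟩ := hγ rfl
    subst hc
    rcases Jint_trich k C hmono hi ht ht' hj with ⟨h1, h2⟩ | ⟨h1, h2⟩ | h
    · simp [ClockCond.sat, h1, h2]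
    · simp [ClockCond.sat, not_lt_of_gt h1, not_lt_of_gt h2]
    · simp [ClockCond.sat, h]
  | eq x c =>
    obtain ⟨j, hj, hc⟩ := hγ rfl
    subst hc
    rcases Jint_trich k C hmono hi ht ht' hj with ⟨h1, h2⟩ | ⟨h1, h2⟩ | h
    · simp [ClockCond.sat, ne_of_gt h1, ne_of_gt h2]
    · simp [ClockCond.sat, ne_of_lt h1, ne_of_lt h2]
    · simp [ClockCond.sat, h]
  | conj γ₁ γ₂ ih₁ ih₂ =>
    have h₁ := ih₁ (fun c hc => hγ (Or.inl hc))
    have h₂ := ih₂ (fun c hc => hγ (Or.inr hc))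
    simp only [ClockCond.sat]; rw [h₁, h₂]
  | disj γ₁ γ₂ ih₁ ih₂ =>
    have h₁ := ih₁ (fun c hc => hγ (Or.inl hc))
    have h₂ := ih₂ (fun c hc => hγ (Or.inr hc))
    simp only [ClockCond.sat]; rw [h₁, h₂]

theorem stmt1 (k : ℕ) (C : ℕ → ℝ) (hC0 : C 0 = 0)
    (hmono : ∀ i, i < k → C i < C (i + 1))
    (γ : ClockCond Unit)
    (hγ : γ.constants ⊆ {c | ∃ i ≤ k, C i = c})
    {A Q : Type} (M : TimedAutomaton A Q Unit)
    (hM : ∀ e ∈ M.E, (e.2.2.1).constants ⊆ {c | ∃ i ≤ k, C i = c}) :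
    (∀ i ≤ 2 * k + 1, ∀ t ∈ Jint k C i, ∀ t' ∈ Jint k C i,
      (γ.sat (fun _ => t) ↔ γ.sat (fun _ => t'))) ∧
    (∀ i ≤ 2 * k + 1, ∀ t ∈ Jint k C i, ∀ t' ∈ Jint k C i,
      ∀ e ∈ M.E, ((e.2.2.1).sat (fun _ => t) ↔ (e.2.2.1).sat (fun _ => t'))) := by
  constructor
  · intro i hi t ht t' ht'
    exact sat_iff_of_Jint k C hmono γ hγ hi ht ht'
  · intro i hi t ht t' ht' e he
    exact sat_iff_of_Jint k C hmono _ (hM e he) hi ht ht'
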